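/- Let μ be a continuous capacity on a measurable space (Ω,𝓕) and let 𝓕₀ be a sub-σ-algebra of 𝓕 such that μ(A) ∈ {0,1} for every A ∈ 𝓕₀. Assume in addition that μ(A ∩ B) = 1 for all A, B ∈ 𝓕₀ with μ(A) = 1 and μ(B) = 1. Then for every 𝓕₀-measurable random variable ξ : Ω → ℝ one has μ({ω : ∫_Ω ξ dμ ≤ ξ(ω) ≤ ∫_Ω ξ dμ̄}) = 1, where the integrals are Choquet integrals with respect to μ and to the conjugate capacity μ̄ respectively. -/

import Mathlib

open MeasureTheory Filter Topology Set

def IsFinAddProb {Ω : Type*} [MeasurableSpace Ω] (P : Set Ω → ℝ) : Prop :=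
  P ∅ = 0 ∧ P Set.univ = 1 ∧
    (∀ A : Set Ω, MeasurableSet A → 0 ≤ P A ∧ P A ≤ 1) ∧
    (∀ A B : Set Ω, MeasurableSet A → MeasurableSet B → Disjoint A B →
      P (A ∪ B) = P A + P B)

def IsCapacity {Ω : Type*} [MeasurableSpace Ω] (μ : Set Ω → ℝ) : Prop :=
  μ ∅ = 0 ∧ μ Set.univ = 1 ∧
    ∀ A B : Set Ω, MeasurableSet A → MeasurableSet B → A ⊆ B → μ A ≤ μ B

def ContBelow {Ω : Type*} [MeasurableSpace Ω] (μ : Set Ω → ℝ) : Prop :=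
  ∀ A : ℕ → Set Ω, (∀ n, MeasurableSet (A n)) → Monotone A →
    Filter.Tendsto (fun n => μ (A n)) Filter.atTop (nhds (μ (⋃ n, A n)))

def ContAbove {Ω : Type*} [MeasurableSpace Ω] (μ : Set Ω → ℝ) : Prop :=
  ∀ A : ℕ → Set Ω, (∀ n, MeasurableSet (A n)) → Antitone A →
    Filter.Tendsto (fun n => μ (A n)) Filter.atTop (nhds (μ (⋂ n, A n)))

def ContAtEmpty {Ω : Type*} [MeasurableSpace Ω] (μ : Set Ω → ℝ) : Prop :=
  ∀ A : ℕ → Set Ω, (∀ n, MeasurableSet (A n)) → Antitone A → (⋂ n, A n) = ∅ →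
    Filter.Tendsto (fun n => μ (A n)) Filter.atTop (nhds 0)

def ContAtUniv {Ω : Type*} [MeasurableSpace Ω] (μ : Set Ω → ℝ) : Prop :=
  ∀ A : ℕ → Set Ω, (∀ n, MeasurableSet (A n)) → Monotone A → (⋃ n, A n) = Set.univ →
    Filter.Tendsto (fun n => μ (A n)) Filter.atTop (nhds 1)

def conjCap {Ω : Type*} (μ : Set Ω → ℝ) (A : Set Ω) : ℝ := 1 - μ Aᶜ

noncomputable def choquet {Ω : Type*} (μ : Set Ω → ℝ) (ξ : Ω → ℝ) : ℝ :=
  (∫ t in Set.Ioi (0:ℝ), μ {ω | ξ ω ≥ t}) +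
    (∫ t in Set.Iio (0:ℝ), (μ {ω | ξ ω ≥ t} - 1))

noncomputable def choquetE {Ω : Type*} (μ : Set Ω → ℝ) (ξ : Ω → EReal) : ℝ :=
  (∫ t in Set.Ioi (0:ℝ), μ {ω | (t : EReal) ≤ ξ ω}) +
    (∫ t in Set.Iio (0:ℝ), (μ {ω | (t : EReal) ≤ ξ ω} - 1))

def UpperProbOf {Ω : Type*} [MeasurableSpace Ω] (𝒮 : Set (Set Ω → ℝ)) (V : Set Ω → ℝ) : Prop :=
  ∀ A : Set Ω, MeasurableSet A → V A = sSup ((fun P => P A) '' 𝒮)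

def LowerProbOf {Ω : Type*} [MeasurableSpace Ω] (𝒮 : Set (Set Ω → ℝ)) (v : Set Ω → ℝ) : Prop :=
  ∀ A : Set Ω, MeasurableSet A → v A = sInf ((fun P => P A) '' 𝒮)

def ErgodicCap {Ω : Type*} [MeasurableSpace Ω] (μ : Set Ω → ℝ) (θ : Ω → Ω) : Prop :=
  ∀ B : Set Ω, MeasurableSet B → θ ⁻¹' B = B →
    (μ B = 0 ∨ μ B = 1) ∧ (μ B = 0 ∨ μ Bᶜ = 0)

def PreservesCap {Ω : Type*} [MeasurableSpace Ω] (μ : Set Ω → ℝ) (θ : Ω → Ω) : Prop :=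
  ∀ A : Set Ω, MeasurableSet A → μ (θ ⁻¹' A) = μ A

def IndepSigmaWrt {Ω : Type*} (μ : Set Ω → ℝ) (m₁ m₂ : MeasurableSpace Ω) : Prop :=
  ∀ A B : Set Ω, MeasurableSet[m₁] A → MeasurableSet[m₂] B → μ (A ∩ B) = μ A * μ B

lemma integral_step (c : ℝ) (F : ℝ → ℝ) (h1 : ∀ t, t < c → F t = 1)
    (h0 : ∀ t, c < t → F t = 0) :
    (∫ t in Set.Ioi (0:ℝ), F t) + (∫ t in Set.Iio (0:ℝ), (F t - 1)) = c := by
  have hne : ∀ᵐ t : ℝ, t ≠ c := by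
    rw [ae_iff]
    simp only [ne_eq, not_not, setOf_eq_eq_singleton]
    exact Real.volume_singleton
  have e1 : (∫ t in Set.Ioi (0:ℝ), F t)
      = ∫ t in Set.Ioi (0:ℝ), (Set.Ioo (0:ℝ) c).indicator (fun _ => (1:ℝ)) t := by
    refine integral_congr_ae ?_
    apply (ae_restrict_iff' measurableSet_Ioi).2
    filter_upwards [hne] with t ht htpos
    rcases lt_or_gt_of_ne ht with h | h
    · rw [h1 t h, Set.indicator_of_mem (Set.mem_Ioo.2 ⟨htpos, h⟩) _]
    · rw [h0 t h, Set.indicator_of_notMem (fun h' => absurd h'.2 (not_lt.2 h.le))]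
  have e2 : (∫ t in Set.Ioi (0:ℝ), (Set.Ioo (0:ℝ) c).indicator (fun _ => (1:ℝ)) t)
      = (ENNReal.ofReal c).toReal := by
    rw [integral_indicator measurableSet_Ioo, Measure.restrict_restrict measurableSet_Ioo,
        Set.inter_eq_left.2 Set.Ioo_subset_Ioi_self, setIntegral_const, measureReal_def, Real.volume_Ioo]
    simp
  have e3 : (∫ t in Set.Iio (0:ℝ), (F t - 1))
      = ∫ t in Set.Iio (0:ℝ), (Set.Ioo c (0:ℝ)).indicator (fun _ => (-1:ℝ)) t := by
    refine integral_congr_ae ?_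
    apply (ae_restrict_iff' measurableSet_Iio).2
    filter_upwards [hne] with t ht htneg
    rcases lt_or_gt_of_ne ht with h | h
    · rw [h1 t h, Set.indicator_of_notMem (fun h' => absurd h'.1 (not_lt.2 h.le))]
      ring
    · rw [h0 t h, Set.indicator_of_mem (Set.mem_Ioo.2 ⟨h, htneg⟩) _]
      ring
  have e4 : (∫ t in Set.Iio (0:ℝ), (Set.Ioo c (0:ℝ)).indicator (fun _ => (-1:ℝ)) t)
      = -(ENNReal.ofReal (-c)).toReal := by
    rw [integral_indicator measurableSet_Ioo, Measure.restrict_restrict measurableSet_Ioo,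
        Set.inter_eq_left.2 Set.Ioo_subset_Iio_self, setIntegral_const, measureReal_def, Real.volume_Ioo]
    simp
  rw [e1, e2, e3, e4]
  rcases le_total c 0 with h | h
  · rw [ENNReal.ofReal_eq_zero.2 h, ENNReal.toReal_ofReal (neg_nonneg.2 h)]
    simp
  · rw [ENNReal.toReal_ofReal h, ENNReal.ofReal_eq_zero.2 (neg_nonpos.2 h)]
    simp

theorem stmt8 {Ω : Type*} [mΩ : MeasurableSpace Ω]
    (μ : Set Ω → ℝ) (hcap : IsCapacity μ) (hb : ContBelow μ) (ha : ContAbove μ)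
    (m₀ : MeasurableSpace Ω) (hm₀ : m₀ ≤ mΩ)
    (h01 : ∀ A : Set Ω, MeasurableSet[m₀] A → μ A = 0 ∨ μ A = 1)
    (hcap1 : ∀ A B : Set Ω, MeasurableSet[m₀] A → MeasurableSet[m₀] B →
      μ A = 1 → μ B = 1 → μ (A ∩ B) = 1)
    (ξ : Ω → ℝ) (hξ : Measurable[m₀] ξ) :
    μ {ω | choquet μ ξ ≤ ξ ω ∧ ξ ω ≤ choquet (conjCap μ) ξ} = 1 := by
  obtain ⟨hμ0, hμu, hmono⟩ := hcap
  -- measurability of level sets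
  have hms : ∀ t : ℝ, MeasurableSet[m₀] {ω | ξ ω ≥ t} := fun t => hξ measurableSet_Ici
  have hms' : ∀ t : ℝ, MeasurableSet[mΩ] {ω | ξ ω ≥ t} := fun t => hm₀ _ (hms t)
  have hmsl : ∀ t : ℝ, MeasurableSet[m₀] {ω | ξ ω < t} := fun t => hξ measurableSet_Iio
  have hmsl' : ∀ t : ℝ, MeasurableSet[mΩ] {ω | ξ ω < t} := fun t => hm₀ _ (hmsl t)
  have hFanti : ∀ s t : ℝ, s ≤ t → μ {ω | ξ ω ≥ t} ≤ μ {ω | ξ ω ≥ s} := fun s t hst =>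
    hmono _ _ (hms' t) (hms' s) (fun ω (h : ξ ω ≥ t) => le_trans hst h)
  have hGmono : ∀ s t : ℝ, s ≤ t → μ {ω | ξ ω < s} ≤ μ {ω | ξ ω < t} := fun s t hst =>
    hmono _ _ (hmsl' s) (hmsl' t) (fun ω (h : ξ ω < s) => lt_of_lt_of_le h hst)
  have hF01 : ∀ t : ℝ, μ {ω | ξ ω ≥ t} = 0 ∨ μ {ω | ξ ω ≥ t} = 1 := fun t => h01 _ (hms t)
  have hG01 : ∀ t : ℝ, μ {ω | ξ ω < t} = 0 ∨ μ {ω | ξ ω < t} = 1 := fun t => h01 _ (hmsl t)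
  -- eventual behaviour of t ↦ μ {ξ ≥ t}
  have keyF1 : ∃ N : ℕ, μ {ω | ξ ω ≥ -(N : ℝ)} = 1 := by
    have hA : Monotone (fun n : ℕ => {ω | ξ ω ≥ -(n : ℝ)}) := by
      intro m n hmn ω (h : ξ ω ≥ -(m : ℝ))
      have h2 : -(n : ℝ) ≤ -(m : ℝ) := neg_le_neg (Nat.cast_le.2 hmn)
      exact le_trans h2 h
    have hU : (⋃ n : ℕ, {ω | ξ ω ≥ -(n : ℝ)}) = univ := by
      ext ω; simp only [Set.mem_iUnion, Set.mem_setOf_eq, Set.mem_univ, iff_true]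
      obtain ⟨n, hn⟩ := exists_nat_gt (-ξ ω)
      exact ⟨n, by simp only [ge_iff_le]; linarith⟩
    have ht := hb _ (fun n => hms' _) hA
    rw [hU, hμu] at ht
    obtain ⟨n, hn⟩ := (ht.eventually (eventually_gt_nhds (by norm_num : (1:ℝ)/2 < 1))).exists
    exact ⟨n, (hF01 _).resolve_left (by intro h; rw [h] at hn; norm_num at hn)⟩
  have keyF0 : ∃ M : ℕ, μ {ω | ξ ω ≥ (M : ℝ)} = 0 := by
    have hA : Antitone (fun n : ℕ => {ω | ξ ω ≥ (n : ℝ)}) := by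
      intro m n hmn ω (h : ξ ω ≥ (n : ℝ))
      exact le_trans (Nat.cast_le.2 hmn) h
    have hI : (⋂ n : ℕ, {ω | ξ ω ≥ (n : ℝ)}) = (∅ : Set Ω) := by
      rw [Set.eq_empty_iff_forall_notMem]
      intro ω hω
      obtain ⟨n, hn⟩ := exists_nat_gt (ξ ω)
      exact absurd (Set.mem_iInter.1 hω n) (not_le.2 hn)
    have ht := ha _ (fun n => hms' _) hA
    rw [hI, hμ0] at ht
    obtain ⟨n, hn⟩ := (ht.eventually (eventually_lt_nhds (by norm_num : (0:ℝ) < 1/2))).exists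
    exact ⟨n, (hF01 _).resolve_right (by intro h; rw [h] at hn; norm_num at hn)⟩
  obtain ⟨N, hN⟩ := keyF1
  obtain ⟨M, hM⟩ := keyF0
  have hSne : Set.Nonempty {t : ℝ | μ {ω | ξ ω ≥ t} = 1} := ⟨-(N : ℝ), hN⟩
  have hSbdd : BddAbove {t : ℝ | μ {ω | ξ ω ≥ t} = 1} := ⟨(M : ℝ), fun t ht => by
    by_contra h
    have h2 := hFanti _ _ (le_of_not_ge h)
    rw [hM] at h2
    have h1 : μ {ω | ξ ω ≥ t} = 1 := ht
    linarith⟩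
  set c : ℝ := sSup {t : ℝ | μ {ω | ξ ω ≥ t} = 1} with hcdef
  have hc1 : ∀ t, t < c → μ {ω | ξ ω ≥ t} = 1 := by
    intro t ht
    obtain ⟨s, hs, hts⟩ := exists_lt_of_lt_csSup hSne ht
    have h2 := hFanti _ _ hts.le
    rw [show μ {ω | ξ ω ≥ s} = 1 from hs] at h2
    rcases hF01 t with h | h
    · rw [h] at h2; linarith
    · exact h
  have hc0 : ∀ t, c < t → μ {ω | ξ ω ≥ t} = 0 := by
    intro t ht
    rcases hF01 t with h | h
    · exact h
    · exact absurd (le_csSup hSbdd h) (not_le.2 ht)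
  -- eventual behaviour of t ↦ μ {ξ < t}
  have keyG1 : ∃ N : ℕ, μ {ω | ξ ω < (N : ℝ)} = 1 := by
    have hA : Monotone (fun n : ℕ => {ω | ξ ω < (n : ℝ)}) := by
      intro m n hmn ω (h : ξ ω < (m : ℝ))
      exact lt_of_lt_of_le h (Nat.cast_le.2 hmn)
    have hU : (⋃ n : ℕ, {ω | ξ ω < (n : ℝ)}) = univ := by
      ext ω; simp only [Set.mem_iUnion, Set.mem_setOf_eq, Set.mem_univ, iff_true]
      exact exists_nat_gt (ξ ω)
    have ht := hb _ (fun n => hmsl' _) hA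
    rw [hU, hμu] at ht
    obtain ⟨n, hn⟩ := (ht.eventually (eventually_gt_nhds (by norm_num : (1:ℝ)/2 < 1))).exists
    exact ⟨n, (hG01 _).resolve_left (by intro h; rw [h] at hn; norm_num at hn)⟩
  have keyG0 : ∃ M : ℕ, μ {ω | ξ ω < -(M : ℝ)} = 0 := by
    have hA : Antitone (fun n : ℕ => {ω | ξ ω < -(n : ℝ)}) := by
      intro m n hmn ω (h : ξ ω < -(n : ℝ))
      have h2 : -(n : ℝ) ≤ -(m : ℝ) := neg_le_neg (Nat.cast_le.2 hmn)
      exact lt_of_lt_of_le h h2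
    have hI : (⋂ n : ℕ, {ω | ξ ω < -(n : ℝ)}) = (∅ : Set Ω) := by
      rw [Set.eq_empty_iff_forall_notMem]
      intro ω hω
      obtain ⟨n, hn⟩ := exists_nat_gt (-ξ ω)
      have h3 := Set.mem_iInter.1 hω n
      simp only [Set.mem_setOf_eq] at h3
      linarith
    have ht := ha _ (fun n => hmsl' _) hA
    rw [hI, hμ0] at ht
    obtain ⟨n, hn⟩ := (ht.eventually (eventually_lt_nhds (by norm_num : (0:ℝ) < 1/2))).exists
    exact ⟨n, (hG01 _).resolve_right (by intro h; rw [h] at hn; norm_num at hn)⟩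
  obtain ⟨N', hN'⟩ := keyG1
  obtain ⟨M', hM'⟩ := keyG0
  have hTne : Set.Nonempty {t : ℝ | μ {ω | ξ ω < t} = 1} := ⟨(N' : ℝ), hN'⟩
  have hTbdd : BddBelow {t : ℝ | μ {ω | ξ ω < t} = 1} := ⟨-(M' : ℝ), fun t ht => by
    by_contra h
    have h2 := hGmono _ _ (le_of_not_ge h)
    rw [hM'] at h2
    have h1 : μ {ω | ξ ω < t} = 1 := ht
    linarith⟩
  set d : ℝ := sInf {t : ℝ | μ {ω | ξ ω < t} = 1} with hddef
  have hd1 : ∀ t, d < t → μ {ω | ξ ω < t} = 1 := by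
    intro t ht
    obtain ⟨s, hs, hst⟩ := exists_lt_of_csInf_lt hTne ht
    have h2 := hGmono _ _ hst.le
    rw [show μ {ω | ξ ω < s} = 1 from hs] at h2
    rcases hG01 t with h | h
    · rw [h] at h2; linarith
    · exact h
  have hd0 : ∀ t, t < d → μ {ω | ξ ω < t} = 0 := by
    intro t ht
    rcases hG01 t with h | h
    · exact h
    · exact absurd (csInf_le hTbdd h) (not_le.2 ht)
  -- choquet values
  have hcomp : ∀ t : ℝ, {ω | ξ ω ≥ t}ᶜ = {ω | ξ ω < t} := by
    intro t; ext ω; simp [not_le]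
  have hchoq1 : choquet μ ξ = c := by
    simpa [choquet] using integral_step c (fun t => μ {ω | ξ ω ≥ t}) hc1 hc0
  have hchoq2 : choquet (conjCap μ) ξ = d := by
    have h1 : ∀ t, t < d → conjCap μ {ω | ξ ω ≥ t} = 1 := by
      intro t ht
      unfold conjCap
      rw [hcomp t, hd0 t ht]; ring
    have h0 : ∀ t, d < t → conjCap μ {ω | ξ ω ≥ t} = 0 := by
      intro t ht
      unfold conjCap
      rw [hcomp t, hd1 t ht]; ring
    simpa [choquet] using integral_step d (fun t => conjCap μ {ω | ξ ω ≥ t}) h1 h0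
  -- μ {ξ ≥ c} = 1
  have hμc : μ {ω | ξ ω ≥ c} = 1 := by
    have hA : Antitone (fun n : ℕ => {ω | ξ ω ≥ c - 1/((n : ℝ)+1)}) := by
      intro m n hmn ω (h : ξ ω ≥ c - 1/((n : ℝ)+1))
      have h2 : (1:ℝ)/((n:ℝ)+1) ≤ 1/((m:ℝ)+1) := by
        apply one_div_le_one_div_of_le (by positivity)
        exact add_le_add_left (Nat.cast_le.2 hmn) 1
      show ξ ω ≥ c - 1/((m:ℝ)+1)
      simp only [ge_iff_le] at h ⊢
      linarith
    have hI : (⋂ n : ℕ, {ω | ξ ω ≥ c - 1/((n : ℝ)+1)}) = {ω | ξ ω ≥ c} := by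
      ext ω
      simp only [Set.mem_iInter, Set.mem_setOf_eq, ge_iff_le]
      constructor
      · intro h
        by_contra hlt
        push_neg at hlt
        obtain ⟨n, hn⟩ := exists_nat_one_div_lt (show (0:ℝ) < c - ξ ω by linarith)
        have h3 := h n
        linarith
      · intro h n
        have h3 : (0:ℝ) < 1/((n:ℝ)+1) := by positivity
        linarith
    have ht := ha _ (fun n => hms' _) hA
    rw [hI] at ht
    have ht' : Tendsto (fun _ : ℕ => (1:ℝ)) atTop (nhds (μ {ω | ξ ω ≥ c})) := by
      refine ht.congr fun n => hc1 _ ?_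
      have h3 : (0:ℝ) < 1/((n:ℝ)+1) := by positivity
      linarith
    exact tendsto_nhds_unique ht' tendsto_const_nhds
  -- μ {ξ ≤ d} = 1
  have hμd : μ {ω | ξ ω ≤ d} = 1 := by
    have hA : Antitone (fun n : ℕ => {ω | ξ ω < d + 1/((n : ℝ)+1)}) := by
      intro m n hmn ω (h : ξ ω < d + 1/((n : ℝ)+1))
      have h2 : (1:ℝ)/((n:ℝ)+1) ≤ 1/((m:ℝ)+1) := by
        apply one_div_le_one_div_of_le (by positivity)
        exact add_le_add_left (Nat.cast_le.2 hmn) 1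
      show ξ ω < d + 1/((m:ℝ)+1)
      linarith
    have hI : (⋂ n : ℕ, {ω | ξ ω < d + 1/((n : ℝ)+1)}) = {ω | ξ ω ≤ d} := by
      ext ω
      simp only [Set.mem_iInter, Set.mem_setOf_eq]
      constructor
      · intro h
        by_contra hlt
        push_neg at hlt
        obtain ⟨n, hn⟩ := exists_nat_one_div_lt (show (0:ℝ) < ξ ω - d by linarith)
        have h3 := h n
        linarith
      · intro h n
        have h3 : (0:ℝ) < 1/((n:ℝ)+1) := by positivity
        linarith
    have ht := ha _ (fun n => hmsl' _) hA
    rw [hI] at ht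
    have ht' : Tendsto (fun _ : ℕ => (1:ℝ)) atTop (nhds (μ {ω | ξ ω ≤ d})) := by
      refine ht.congr fun n => hd1 _ ?_
      have h3 : (0:ℝ) < 1/((n:ℝ)+1) := by positivity
      linarith
    exact tendsto_nhds_unique ht' tendsto_const_nhds
  -- finish
  rw [hchoq1, hchoq2]
  have hfin := hcap1 {ω | ξ ω ≥ c} {ω | ξ ω ≤ d} (hms c) (hξ measurableSet_Iic) hμc hμd
  have hset : {ω | c ≤ ξ ω ∧ ξ ω ≤ d} = {ω | ξ ω ≥ c} ∩ {ω | ξ ω ≤ d} := rfl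
  rw [hset]
  exact hfin
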